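/- For all integers d ≥ 1, r ≥ 1 and 0 ≤ ℓ < d, the following identity of formal power series holds: (1−x)^{d+1} · ∑_{t≥1} (rt)^ℓ (rt−1)^{d−ℓ} x^t = x · I_d(A_{d,ℓ}^{(r)}). (This is the identity h*([0,r]^d_{2d−ℓ}; x) = x·I_d A_{d,ℓ}^{(r)} asserted and used in the proof of Theorem 6.6; here (rt)^ℓ(rt−1)^{d−ℓ} is the number of lattice points x ∈ ℤ^d with 0 ≤ x_i < rt for ℓ of the coordinates and 0 < x_i < rt for the remaining d−ℓ coordinates.) -/

import Mathlib

open Polynomial PowerSeries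
open Finset

lemma myNegOnePowSub (m i : ℕ) (h : i ≤ m) : (-1:ℝ)^(m-i) = (-1)^m * (-1)^i := by
  have h2 : ((-1:ℝ)^i)^2 = 1 := by
    rw [← pow_mul, mul_comm, pow_mul, neg_one_sq, one_pow]
  have : (-1:ℝ)^(m-i) * ((-1)^i * (-1)^i) = (-1)^m * (-1)^i := by
    rw [← mul_assoc, ← pow_add, Nat.sub_add_cancel h]
  rw [← this, ← sq, h2, mul_one]

lemma myFwdDiffEval (p : ℝ[X]) :
    fwdDiff (1:ℝ) (fun x : ℝ => p.eval x) = fun x => (taylor 1 p - p).eval x := by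
  funext x
  simp [fwdDiff, taylor_eval]

lemma myFwdDiffIterZero : ∀ (n : ℕ) (p : ℝ[X]), p.natDegree < n →
    (fwdDiff (1:ℝ))^[n] (fun x : ℝ => p.eval x) = fun _ => 0 := by
  intro n
  induction n with
  | zero => intro p hp; omega
  | succ n ih =>
    intro p hp
    rw [Function.iterate_succ_apply, myFwdDiffEval]
    set q : ℝ[X] := taylor 1 p - p with hq
    by_cases hq0 : q = 0
    · rw [hq0]
      simp only [eval_zero]
      exact Function.iterate_fixed (fwdDiff_const 1 (0:ℝ)) n
    · have hpd : p.natDegree ≠ 0 := by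
        intro h0
        rw [Polynomial.eq_C_of_natDegree_eq_zero h0] at hq
        simp [hq] at hq0
      have hp0 : p ≠ 0 := fun h => hpd (by simp [h])
      have hdeg : q.degree < p.degree := by
        have hT0 : taylor 1 p ≠ 0 := fun h => hp0 ((taylor_injective 1) (by simpa using h))
        have hd : (taylor 1 p).degree = p.degree := by
          rw [Polynomial.degree_eq_natDegree hp0, Polynomial.degree_eq_natDegree hT0,
            natDegree_taylor]
        have hlc : (taylor 1 p).leadingCoeff = p.leadingCoeff := by
          rw [taylor_apply, Polynomial.leadingCoeff_comp (by rw [natDegree_X_add_C]; exact one_ne_zero),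
            leadingCoeff_X_add_C, one_pow, mul_one]
        have := Polynomial.degree_sub_lt hd hT0 hlc
        rw [hd] at this
        exact this
      have : q.natDegree < n := by
        have := Polynomial.natDegree_lt_natDegree hq0 hdeg
        omega
      exact ih q this

lemma mySumAlt (m : ℕ) (p : ℝ[X]) (hp : p.natDegree ≤ m) (c : ℝ) :
    ∑ j ∈ range (m+2), (-1:ℝ)^j * ((m+1).choose j) * p.eval (c + j) = 0 := by
  have h0 : (fwdDiff (1:ℝ))^[m+1] (fun x : ℝ => p.eval x) c = 0 := by
    rw [myFwdDiffIterZero (m+1) p (by omega)]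
  rw [fwdDiff_iter_eq_sum_shift] at h0
  simp only [nsmul_eq_mul, mul_one, zsmul_eq_mul] at h0
  push_cast at h0
  have h2 : (-1:ℝ)^(m+1) * (-1)^(m+1) = 1 := by
    rw [← mul_pow]; norm_num
  have h1 : ∑ j ∈ range (m+2), (-1:ℝ)^j * ((m+1).choose j) * p.eval (c + j)
      = (-1:ℝ)^(m+1) * ∑ k ∈ range (m+2),
          (-1:ℝ) ^ (m+1-k) * ((m+1).choose k) * p.eval (c + k) := by
    rw [mul_sum]
    refine sum_congr rfl fun k hk => ?_
    rw [mem_range] at hk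
    rw [myNegOnePowSub (m+1) k (by omega)]
    linear_combination (-((-1:ℝ)^k * ((m+1).choose k) * p.eval (c + k))) * h2
  rw [h1]
  rw [show (∑ k ∈ range (m+2), (-1:ℝ) ^ (m+1-k) * ((m+1).choose k) * p.eval (c + k)) = 0 from by
    rw [← h0]]
  ring

lemma myCoeffPow (m k : ℕ) :
    PowerSeries.coeff (R := ℝ) k ((1 - PowerSeries.X)^m) = (-1)^k * m.choose k := by
  have hexp : (1 - PowerSeries.X : PowerSeries ℝ)^m
      = ∑ j ∈ range (m+1),
          PowerSeries.C (R := ℝ) ((-1)^j * (m.choose j : ℝ)) * PowerSeries.X ^ j := by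
    rw [sub_eq_add_neg, add_comm, add_pow]
    refine sum_congr rfl fun j hj => ?_
    rw [one_pow, mul_one, neg_pow, map_mul, map_pow, map_neg, map_one,
      ← map_natCast (PowerSeries.C (R := ℝ)) (m.choose j)]
    ring
  rw [hexp, map_sum]
  simp only [PowerSeries.coeff_C_mul, PowerSeries.coeff_X_pow, mul_ite, mul_one, mul_zero]
  rw [Finset.sum_ite_eq (range (m+1)) k fun j => (-1:ℝ)^j * (m.choose j : ℝ)]
  by_cases hk : k ∈ range (m+1)
  · rw [if_pos hk]
  · rw [if_neg hk]
    rw [mem_range] at hk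
    rw [Nat.choose_eq_zero_of_lt (by omega)]
    simp

lemma myCoeffProd (m : ℕ) (h : ℕ → ℝ) (n : ℕ) :
    PowerSeries.coeff (R := ℝ) n ((1 - PowerSeries.X)^m * PowerSeries.mk h)
      = ∑ j ∈ range (n+1), (-1:ℝ)^j * (m.choose j) * h (n - j) := by
  rw [PowerSeries.coeff_mul, Finset.Nat.sum_antidiagonal_eq_sum_range_succ_mk]
  refine sum_congr rfl fun j hj => ?_
  rw [myCoeffPow, PowerSeries.coeff_mk]


/-- `A` is the `r`-colored `ℓ`-Eulerian polynomial `A_{d,ℓ}^{(r)}`, i.e. the polynomial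
satisfying the formal power series identity
`A = (1 - x)^{d+1} * ∑_{t ≥ 0} (r t)^ℓ (r t + 1)^{d - ℓ} x^t`. -/
def IsColoredEulerian (d r ℓ : ℕ) (A : Polynomial ℝ) : Prop :=
  (A : PowerSeries ℝ) =
    (1 - PowerSeries.X) ^ (d + 1) *
      PowerSeries.mk fun t : ℕ => ((r : ℝ) * t) ^ ℓ * ((r : ℝ) * t + 1) ^ (d - ℓ)

/-- The identity `h*([0,r]^d_{2d-ℓ}; x) = x · I_d(A_{d,ℓ}^{(r)})` used in the proof of
Theorem 6.6: for `d ≥ 1`, `r ≥ 1` and `0 ≤ ℓ < d`, one has the formal power series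
identity `(1-x)^{d+1} ∑_{t ≥ 1} (rt)^ℓ (rt-1)^{d-ℓ} x^t = x · I_d(A_{d,ℓ}^{(r)})`,
where `I_d(p) = x^d p(1/x)` is formalized as `Polynomial.reflect d`. -/
theorem h_star_reciprocal_halfopen_dilated_cube (d r ℓ : ℕ) (hd : 1 ≤ d) (hr : 1 ≤ r)
    (hℓ : ℓ < d) (A : Polynomial ℝ) (hA : IsColoredEulerian d r ℓ A) :
    ((1 - PowerSeries.X : PowerSeries ℝ) ^ (d + 1) *
        PowerSeries.mk fun t : ℕ =>
          if t = 0 then 0 else ((r : ℝ) * t) ^ ℓ * ((r : ℝ) * t - 1) ^ (d - ℓ)) =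
      ((Polynomial.X * Polynomial.reflect d A : Polynomial ℝ) : PowerSeries ℝ) := by
  classical
  set P : ℝ[X] := (Polynomial.C (r:ℝ) * Polynomial.X)^ℓ *
      (Polynomial.C (r:ℝ) * Polynomial.X + 1)^(d-ℓ) with hP
  have hPeval : ∀ x : ℝ, P.eval x = ((r:ℝ)*x)^ℓ * ((r:ℝ)*x+1)^(d-ℓ) := by
    intro x; simp [hP]
  have hPdeg : P.natDegree ≤ d := by
    have h1 : (Polynomial.C (r:ℝ) * Polynomial.X).natDegree ≤ 1 :=
      le_trans (natDegree_C_mul_le _ _) (le_of_eq natDegree_X)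
    have h2 : (Polynomial.C (r:ℝ) * Polynomial.X + 1).natDegree ≤ 1 :=
      le_trans (natDegree_add_le _ _)
        (max_le h1 (by rw [Polynomial.natDegree_one]; omega))
    have g1 : ((Polynomial.C (r:ℝ) * Polynomial.X)^ℓ).natDegree ≤ ℓ :=
      le_trans natDegree_pow_le
        (le_trans (Nat.mul_le_mul_left ℓ h1) (le_of_eq (mul_one ℓ)))
    have g2 : ((Polynomial.C (r:ℝ) * Polynomial.X + 1)^(d-ℓ)).natDegree ≤ d - ℓ :=
      le_trans natDegree_pow_le
        (le_trans (Nat.mul_le_mul_left (d-ℓ) h2) (le_of_eq (mul_one (d-ℓ))))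
    refine le_trans natDegree_mul_le ?_
    have := add_le_add g1 g2
    omega
  have hkey : ∀ c : ℝ, ∑ j ∈ range (d+2), (-1:ℝ)^j * ((d+1).choose j) * P.eval (c + j) = 0 :=
    fun c => mySumAlt d P hPdeg c
  have hsign : ∀ x : ℝ, ((r:ℝ)*x)^ℓ * ((r:ℝ)*x - 1)^(d-ℓ) = (-1:ℝ)^d * P.eval (-x) := by
    intro x
    have hdd : (-1:ℝ)^d = (-1)^ℓ * (-1)^(d-ℓ) := by
      rw [← pow_add, Nat.add_sub_cancel' (le_of_lt hℓ)]
    have e1 : ((r:ℝ)*x)^ℓ = (-1:ℝ)^ℓ * ((r:ℝ)*(-x))^ℓ := by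
      rw [← mul_pow]; congr 1; ring
    have e2 : ((r:ℝ)*x - 1)^(d-ℓ) = (-1:ℝ)^(d-ℓ) * ((r:ℝ)*(-x)+1)^(d-ℓ) := by
      rw [← mul_pow]; congr 1; ring
    rw [e1, e2, hPeval, hdd]; ring
  have hAc : ∀ k : ℕ, A.coeff k
      = ∑ j ∈ range (k+1), (-1:ℝ)^j * ((d+1).choose j) * P.eval ((k-j : ℕ):ℝ) := by
    intro k
    have h := congrArg (PowerSeries.coeff (R := ℝ) k) hA
    rw [Polynomial.coeff_coe] at h
    rw [h, myCoeffProd]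
    exact sum_congr rfl fun j hj => by rw [hPeval]
  have hdrop : ∀ k, d+1 ≤ k → A.coeff k
      = ∑ j ∈ range (d+2), (-1:ℝ)^j * ((d+1).choose j) * P.eval ((k-j:ℕ):ℝ) := by
    intro k hk
    rw [hAc k]
    symm
    apply Finset.sum_subset (by rw [range_subset_range]; omega)
    intro j hj hnj
    rw [mem_range] at hnj
    rw [Nat.choose_eq_zero_of_lt (by omega)]
    simp
  have hvanish : ∀ k, d+1 ≤ k → A.coeff k = 0 := by
    intro k hk
    rw [hdrop k hk]
    have hre := Finset.sum_range_reflect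
      (fun j => (-1:ℝ)^j * ((d+1).choose j) * P.eval (((k:ℝ)-(d+1)) + j)) (d+2)
    have e : ∀ j ∈ range (d+2),
        (-1:ℝ)^j * ((d+1).choose j) * P.eval ((k-j:ℕ):ℝ)
          = (-1:ℝ)^(d+1) * ((-1:ℝ)^(d+2-1-j) * ((d+1).choose (d+2-1-j)) *
              P.eval (((k:ℝ)-(d+1)) + ((d+2-1-j : ℕ):ℝ))) := by
      intro j hj
      rw [mem_range] at hj
      have hj1 : j ≤ d+1 := by omega
      have he1 : d+2-1-j = d+1-j := by omega
      have hs : (-1:ℝ)^(d+1) * (-1:ℝ)^(d+1) = 1 := by rw [← mul_pow]; norm_num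
      have he2 : ((k-j:ℕ):ℝ) = ((k:ℝ)-(d+1)) + ((d+1-j:ℕ):ℝ) := by
        push_cast [Nat.cast_sub (show j ≤ k by omega), Nat.cast_sub hj1]
        ring
      rw [he1, myNegOnePowSub (d+1) j hj1, Nat.choose_symm hj1, he2]
      linear_combination (-((-1:ℝ)^j * (((d+1).choose j : ℝ)) *
        P.eval (((k:ℝ)-(d+1)) + ((d+1-j:ℕ):ℝ)))) * hs
    rw [sum_congr rfl e, ← mul_sum, hre, hkey, mul_zero]
  have hAdeg : A.natDegree ≤ d := by
    rw [Polynomial.natDegree_le_iff_coeff_eq_zero]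
    intro N hN
    exact hvanish N (by omega)
  -- main coefficient comparison
  ext n
  rw [myCoeffProd, Polynomial.coeff_coe]
  rcases n with _ | m
  · simp [Polynomial.mul_coeff_zero]
  · rw [Polynomial.coeff_X_mul, Polynomial.coeff_reflect]
    by_cases hm : m ≤ d
    · rw [Polynomial.revAt_le hm, hAc (d - m)]
      rw [Finset.sum_range_succ, if_pos (show m + 1 - (m+1) = 0 from by omega),
        mul_zero, add_zero]
      have e3 : ∀ j ∈ range (m+1),
          ((-1:ℝ)^j * (((d+1).choose j : ℕ):ℝ) *
            if m + 1 - j = 0 then (0:ℝ)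
            else ((r:ℝ) * ((m+1-j:ℕ):ℝ))^ℓ * ((r:ℝ) * ((m+1-j:ℕ):ℝ) - 1)^(d-ℓ))
            = (-1:ℝ)^d * ((-1:ℝ)^j * (((d+1).choose j : ℕ):ℝ)
                * P.eval (-((m:ℝ)+1) + j)) := by
        intro j hj; rw [mem_range] at hj
        rw [if_neg (show ¬ (m+1-j = 0) from by omega), hsign,
          show -(((m+1-j:ℕ)):ℝ) = -((m:ℝ)+1) + j from by
            push_cast [Nat.cast_sub (show j ≤ m+1 by omega)]; ring]
        ring
      rw [sum_congr rfl e3, ← mul_sum]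
      have hs1 : ∑ j ∈ range (m+1), (-1:ℝ)^j * (((d+1).choose j : ℕ):ℝ)
            * P.eval (-((m:ℝ)+1) + j)
          = - ∑ i ∈ range (d-m+1), (-1:ℝ)^(m+1+i) * (((d+1).choose (m+1+i) : ℕ):ℝ)
              * P.eval ((i:ℕ):ℝ) := by
        have hk := hkey (-((m:ℝ)+1))
        rw [range_eq_Ico, ← Finset.sum_Ico_consecutive _ (Nat.zero_le (m+1))
          (show m+1 ≤ d+2 from by omega), ← range_eq_Ico,
          Finset.sum_Ico_eq_sum_range,
          show d+2-(m+1) = d-m+1 from by omega] at hk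
        have e4 : ∀ i ∈ range (d-m+1),
            (-1:ℝ)^(m+1+i) * (((d+1).choose (m+1+i) : ℕ):ℝ)
                * P.eval (-((m:ℝ)+1) + ((m+1+i:ℕ):ℝ))
              = (-1:ℝ)^(m+1+i) * (((d+1).choose (m+1+i) : ℕ):ℝ) * P.eval ((i:ℕ):ℝ) := by
          intro i hi
          rw [show -((m:ℝ)+1) + ((m+1+i:ℕ):ℝ) = ((i:ℕ):ℝ) from by push_cast; ring]
        rw [sum_congr rfl e4] at hk
        linarith [hk]
      rw [hs1, ← Finset.sum_range_reflect
        (fun j => (-1:ℝ)^j * (((d+1).choose j : ℕ):ℝ) * P.eval ((d-m-j:ℕ):ℝ)) (d-m+1)]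
      have e5 : ∀ j ∈ range (d-m+1),
          (-1:ℝ)^(d-m+1-1-j) * (((d+1).choose (d-m+1-1-j) : ℕ):ℝ)
              * P.eval ((d-m-(d-m+1-1-j):ℕ):ℝ)
            = -((-1:ℝ)^d * ((-1:ℝ)^(m+1+j) * (((d+1).choose (m+1+j) : ℕ):ℝ)
                * P.eval ((j:ℕ):ℝ))) := by
        intro j hj; rw [mem_range] at hj
        rw [show d-m+1-1-j = d+1-(m+1+j) from by omega,
          show d-m-(d+1-(m+1+j)) = j from by omega,
          Nat.choose_symm (show m+1+j ≤ d+1 from by omega),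
          myNegOnePowSub (d+1) (m+1+j) (by omega), pow_succ]
        ring
      rw [sum_congr rfl e5, Finset.sum_neg_distrib, ← mul_sum]
      ring
    · rw [Polynomial.revAt_eq_self_of_lt (by omega), hvanish m (by omega)]
      rw [← Finset.sum_subset (show range (d+2) ⊆ range (m+1+1) from by
          rw [range_subset_range]; omega)
        (fun j hj hnj => by
          rw [mem_range] at hnj
          rw [Nat.choose_eq_zero_of_lt (show d+1 < j from by omega)]
          simp)]
      have e2 : ∀ j ∈ range (d+2),
          ((-1:ℝ)^j * (((d+1).choose j : ℕ):ℝ) *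
            if m + 1 - j = 0 then (0:ℝ)
            else ((r:ℝ) * ((m+1-j:ℕ):ℝ))^ℓ * ((r:ℝ) * ((m+1-j:ℕ):ℝ) - 1)^(d-ℓ))
            = (-1:ℝ)^d * ((-1:ℝ)^j * (((d+1).choose j : ℕ):ℝ)
                * P.eval (-((m:ℝ)+1) + j)) := by
        intro j hj; rw [mem_range] at hj
        rw [if_neg (show ¬ (m+1-j = 0) from by omega), hsign,
          show -(((m+1-j:ℕ)):ℝ) = -((m:ℝ)+1) + j from by
            push_cast [Nat.cast_sub (show j ≤ m+1 by omega)]; ring]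
        ring
      rw [sum_congr rfl e2, ← mul_sum, hkey, mul_zero]
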